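/- Let p ≪ q be probability measures with both (dp/dq) and its pseudo-inverse (dp/dq)⁻¹ essentially bounded with respect to q. Then α ↦ Q_α(p,q) = ∫ (dp/dq)^α dq extends to an entire function on ℂ; specifically for α = ±a + ib with a > 0 one has |Q_α(p,q)| ≤ ‖(dp/dq)^{±1}‖_{L^∞(q)}^a < ∞. -/

import Mathlib

open MeasureTheory Complex
open scoped ENNReal

private lemma log_abs_bound {t C c : ℝ} (ht : 0 < t) (h1 : t ≤ C) (h2 : t⁻¹ ≤ c) :
    |Real.log t| ≤ |Real.log C| + |Real.log c| := by
  have hlt : Real.log t ≤ Real.log C := Real.log_le_log ht h1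
  have hlt2 : Real.log t⁻¹ ≤ Real.log c := Real.log_le_log (inv_pos.2 ht) h2
  rw [Real.log_inv] at hlt2
  have h3 := le_abs_self (Real.log C)
  have h4 := le_abs_self (Real.log c)
  have h5 := abs_nonneg (Real.log C)
  have h6 := abs_nonneg (Real.log c)
  rw [abs_le]
  constructor <;> linarith

private lemma rpow_le_exp_bound {t r M L : ℝ} (ht : 0 < t) (hlog : |Real.log t| ≤ L)
    (hr : |r| ≤ M) (hM : 0 ≤ M) : t ^ r ≤ Real.exp (M * L) := by
  rw [Real.rpow_def_of_pos ht]
  apply Real.exp_le_exp.2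
  calc Real.log t * r ≤ |Real.log t * r| := le_abs_self _
    _ = |r| * |Real.log t| := by rw [abs_mul, mul_comm]
    _ ≤ M * L := mul_le_mul hr hlog (abs_nonneg _) hM

private lemma meas_if_cpow {X : Type*} [MeasurableSpace X] {f : X → ℝ} (hf : Measurable f)
    (α : ℂ) : Measurable (fun x => if f x = 0 then (0 : ℂ) else (f x : ℂ) ^ α) := by
  have : (fun x => if f x = 0 then (0 : ℂ) else (f x : ℂ) ^ α)
      = fun x => if f x = 0 then (0 : ℂ) else Complex.exp (Complex.log (f x) * α) := by
    funext x
    split_ifs with h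
    · rfl
    · rw [Complex.cpow_def_of_ne_zero (by exact_mod_cast h)]
  rw [this]
  exact Measurable.ite (hf (measurableSet_singleton 0)) measurable_const
    (Complex.measurable_exp.comp
      ((Complex.measurable_log.comp (Complex.measurable_ofReal.comp hf)).mul measurable_const))

/-- Let `p ≪ q` be probability measures such that the likelihood ratio `dp/dq` and its
pseudo-inverse `(dp/dq)⁻¹` are `q`-essentially bounded (by `C` and `c` respectively).
Then `α ↦ Q_α(p,q) = ∫ (dp/dq)^α dq` extends to an entire function `F` on `ℂ` (defined
with the pseudo-power convention `0^α = 0`), agreeing with `Q_α` at real `α ≠ 0`, and for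
`α = ±a + ib` with `a > 0` one has `‖F(a+ib)‖ ≤ C^a` and `‖F(-a+ib)‖ ≤ c^a`. -/
theorem Q_entire_of_bounded_likelihood_ratio {X : Type*} [MeasurableSpace X]
    (p q : Measure X) [IsProbabilityMeasure p] [IsProbabilityMeasure q]
    (hac : p ≪ q) (C c : ℝ) (hC0 : 0 ≤ C) (hc0 : 0 ≤ c)
    (hC : ∀ᵐ x ∂q, (p.rnDeriv q x).toReal ≤ C)
    (hc : ∀ᵐ x ∂q, ((p.rnDeriv q x).toReal)⁻¹ ≤ c)
    (F : ℂ → ℂ)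
    (hF : F = fun α => ∫ x, (if (p.rnDeriv q x).toReal = 0 then 0
            else ((p.rnDeriv q x).toReal : ℂ) ^ α) ∂q) :
    Differentiable ℂ F
    ∧ (∀ α : ℝ, α ≠ 0 → F (α : ℂ)
        = ((∫⁻ x, p.rnDeriv q x ^ α
              ∂(q.restrict {x | p.rnDeriv q x ≠ 0})).toReal : ℂ))
    ∧ (∀ a b : ℝ, 0 < a →
        ‖F (a + b * Complex.I)‖ ≤ C ^ a ∧ ‖F (-a + b * Complex.I)‖ ≤ c ^ a) := by
  subst hF
  set f : X → ℝ := fun x => (p.rnDeriv q x).toReal with hf_def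
  have hf_meas : Measurable f := (Measure.measurable_rnDeriv p q).ennreal_toReal
  have hf_nonneg : ∀ x, 0 ≤ f x := fun x => ENNReal.toReal_nonneg
  set L : ℝ := |Real.log C| + |Real.log c| with hL_def
  have hL0 : 0 ≤ L := by positivity
  have hae : ∀ᵐ x ∂q, f x ≤ C ∧ (f x)⁻¹ ≤ c := hC.and hc
  set g : ℂ → X → ℂ := fun α x => if f x = 0 then (0 : ℂ) else (f x : ℂ) ^ α with hg_def
  have hg_meas : ∀ α : ℂ, AEStronglyMeasurable (g α) q :=
    fun α => (meas_if_cpow hf_meas α).aestronglyMeasurable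
  -- norm of g
  have hg_norm : ∀ (α : ℂ) (x : X), f x ≠ 0 → ‖g α x‖ = f x ^ α.re := by
    intro α x hx
    simp only [hg_def, if_neg hx]
    exact Complex.norm_cpow_eq_rpow_re_of_pos (lt_of_le_of_ne (hf_nonneg x) (Ne.symm hx)) α
  have hg_le : ∀ (M : ℝ) (α : ℂ), 0 ≤ M → |α.re| ≤ M → ∀ x : X, f x ≤ C → (f x)⁻¹ ≤ c →
      ‖g α x‖ ≤ Real.exp (M * L) := by
    intro M α hM hα x hx1 hx2
    by_cases h : f x = 0
    · simp only [hg_def, if_pos h, norm_zero]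
      exact (Real.exp_pos _).le
    · rw [hg_norm α x h]
      have hpos : 0 < f x := lt_of_le_of_ne (hf_nonneg x) (Ne.symm h)
      exact rpow_le_exp_bound hpos (log_abs_bound hpos hx1 hx2) hα hM
  have hg_int : ∀ α : ℂ, Integrable (g α) q := by
    intro α
    refine (integrable_const (Real.exp (|α.re| * L))).mono' (hg_meas α) ?_
    filter_upwards [hae] with x hx
    exact hg_le |α.re| α (abs_nonneg _) le_rfl x hx.1 hx.2
  refine ⟨?_, ?_, ?_⟩
  · -- differentiability
    intro α₀
    set g' : ℂ → X → ℂ := fun α x =>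
      if f x = 0 then (0 : ℂ) else (f x : ℂ) ^ α * (Real.log (f x) : ℂ) with hg'_def
    have hg'_meas : AEStronglyMeasurable (g' α₀) q := by
      apply Measurable.aestronglyMeasurable
      have : g' α₀ = fun x => (if f x = 0 then (0 : ℂ) else (f x : ℂ) ^ α₀)
          * (if f x = 0 then (0:ℂ) else (Real.log (f x) : ℂ)) := by
        funext x; by_cases h : f x = 0 <;> simp [hg'_def, h]
      rw [this]
      exact (meas_if_cpow hf_meas α₀).mul
        (Measurable.ite (hf_meas (measurableSet_singleton 0)) measurable_const
          (Complex.measurable_ofReal.comp (Real.measurable_log.comp hf_meas)))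
    have key := hasDerivAt_integral_of_dominated_loc_of_deriv_le
      (F := g) (F' := g') (x₀ := α₀) (μ := q)
      (bound := fun _ => Real.exp ((|α₀.re| + 1) * L) * L) (Metric.ball_mem_nhds α₀ one_pos)
      (Filter.Eventually.of_forall fun α => hg_meas α) (hg_int α₀) hg'_meas
      ?_ (integrable_const _) ?_
    · exact key.2.differentiableAt
    · -- bound for g'
      filter_upwards [hae] with x hx α hα
      by_cases h : f x = 0
      · simp only [hg'_def, if_pos h, norm_zero]
        positivity
      · have hpos : 0 < f x := lt_of_le_of_ne (hf_nonneg x) (Ne.symm h)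
        have hlog : |Real.log (f x)| ≤ L := log_abs_bound hpos hx.1 hx.2
        have hre : |α.re| ≤ |α₀.re| + 1 := by
          have h1 : |α.re - α₀.re| ≤ ‖α - α₀‖ := by
            simpa [Complex.sub_re] using Complex.abs_re_le_norm (α - α₀)
          have h2 : ‖α - α₀‖ < 1 := by
            rw [Metric.mem_ball, Complex.dist_eq] at hα
            exact hα
          have h3 := abs_sub_abs_le_abs_sub α.re α₀.re
          linarith
        have hcpow : ‖(f x : ℂ) ^ α‖ ≤ Real.exp ((|α₀.re| + 1) * L) := by
          rw [Complex.norm_cpow_eq_rpow_re_of_pos hpos]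
          exact rpow_le_exp_bound hpos hlog hre (by positivity)
        calc ‖g' α x‖ = ‖(f x : ℂ) ^ α‖ * |Real.log (f x)| := by
              simp [hg'_def, if_neg h, Complex.norm_real]
          _ ≤ Real.exp ((|α₀.re| + 1) * L) * L :=
              mul_le_mul hcpow hlog (abs_nonneg _) (Real.exp_pos _).le
    · -- differentiability pointwise
      refine Filter.Eventually.of_forall fun x => fun α _ => ?_
      by_cases h : f x = 0
      · have : (fun α => g α x) = fun _ => (0 : ℂ) := by
          funext β; simp [hg_def, if_pos h]
        rw [hg'_def]
        simp only [if_pos h]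
        rw [this]
        exact hasDerivAt_const α 0
      · have hb : (f x : ℂ) ≠ 0 := by exact_mod_cast h
        have hd := (hasStrictDerivAt_const_cpow (x := (f x : ℂ)) (y := α)
          (Or.inl hb)).hasDerivAt
        have : (fun β => g β x) = fun β => (f x : ℂ) ^ β := by
          funext β; simp [hg_def, if_neg h]
        rw [this, hg'_def]
        simp only [if_neg h]
        rwa [Complex.ofReal_log (hf_nonneg x)]
  · -- real values
    intro α hα
    set h : X → ℝ := fun x => if f x = 0 then 0 else f x ^ α with hh_def
    have hgh : (fun x => g (α : ℂ) x) = fun x => ((h x : ℝ) : ℂ) := by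
      funext x
      by_cases hx : f x = 0
      · simp [hg_def, hh_def, hx]
      · simp only [hg_def, hh_def, if_neg hx]
        exact (Complex.ofReal_cpow (hf_nonneg x) α).symm
    have h_nonneg : 0 ≤ᵐ[q] h := by
      refine Filter.Eventually.of_forall fun x => ?_
      by_cases hx : f x = 0
      · simp [hh_def, hx]
      · simp only [hh_def, if_neg hx]
        exact Real.rpow_nonneg (hf_nonneg x) α
    have h_meas : AEStronglyMeasurable h q := by
      apply Measurable.aestronglyMeasurable
      have : h = fun x => if f x = 0 then 0 else Real.exp (Real.log (f x) * α) := by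
        funext x
        by_cases hx : f x = 0
        · simp [hh_def, hx]
        · simp only [hh_def, if_neg hx]
          rw [Real.rpow_def_of_pos (lt_of_le_of_ne (hf_nonneg x) (Ne.symm hx)), mul_comm]
      rw [this]
      exact Measurable.ite (hf_meas (measurableSet_singleton 0)) measurable_const
        (Real.measurable_exp.comp ((Real.measurable_log.comp hf_meas).mul measurable_const))
    have step1 : ∫ x, g (α : ℂ) x ∂q = ((∫ x, h x ∂q : ℝ) : ℂ) := by
      rw [hgh]; exact integral_ofReal
    have step2 : ∫ x, h x ∂q = (∫⁻ x, ENNReal.ofReal (h x) ∂q).toReal :=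
      integral_eq_lintegral_of_nonneg_ae h_nonneg h_meas
    have hs_meas : MeasurableSet {x | p.rnDeriv q x ≠ 0} :=
      ((Measure.measurable_rnDeriv p q) (measurableSet_singleton 0)).compl
    have step3 : ∫⁻ x, ENNReal.ofReal (h x) ∂q
        = ∫⁻ x, p.rnDeriv q x ^ α ∂(q.restrict {x | p.rnDeriv q x ≠ 0}) := by
      rw [← lintegral_indicator hs_meas]
      apply lintegral_congr_ae
      filter_upwards [Measure.rnDeriv_lt_top p q] with x hx
      by_cases h0 : p.rnDeriv q x = 0
      · have hfx : f x = 0 := by simp [hf_def, h0]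
        have : x ∉ {x | p.rnDeriv q x ≠ 0} := by simp [h0]
        simp [hh_def, hfx, Set.indicator_of_notMem this]
      · have hfx : f x ≠ 0 := by
          simp only [hf_def]
          exact ENNReal.toReal_ne_zero.2 ⟨h0, hx.ne⟩
        have hfxpos : 0 < f x := lt_of_le_of_ne (hf_nonneg x) (Ne.symm hfx)
        have hmem : x ∈ {x | p.rnDeriv q x ≠ 0} := h0
        rw [Set.indicator_of_mem hmem]
        simp only [hh_def, if_neg hfx]
        rw [← ENNReal.ofReal_rpow_of_pos hfxpos]
        congr 1
        exact ENNReal.ofReal_toReal hx.ne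
    show ∫ x, g (α : ℂ) x ∂q = _
    rw [step1, step2, step3]
  · -- norm bounds
    intro a b ha
    constructor
    · have hbd : ∀ᵐ x ∂q, ‖g (↑a + ↑b * Complex.I) x‖ ≤ C ^ a := by
        filter_upwards [hC] with x hx
        by_cases h : f x = 0
        · simp only [hg_def, if_pos h, norm_zero]
          exact Real.rpow_nonneg hC0 a
        · rw [hg_norm _ x h]
          have : (↑a + ↑b * Complex.I).re = a := by simp
          rw [this]
          exact Real.rpow_le_rpow (hf_nonneg x) hx ha.le
      calc ‖∫ x, g (↑a + ↑b * Complex.I) x ∂q‖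
          ≤ C ^ a * (q Set.univ).toReal := norm_integral_le_of_norm_le_const hbd
        _ = C ^ a := by simp
    · have hbd : ∀ᵐ x ∂q, ‖g (-↑a + ↑b * Complex.I) x‖ ≤ c ^ a := by
        filter_upwards [hc] with x hx
        by_cases h : f x = 0
        · simp only [hg_def, if_pos h, norm_zero]
          exact Real.rpow_nonneg hc0 a
        · rw [hg_norm _ x h]
          have : (-↑a + ↑b * Complex.I).re = -a := by simp
          rw [this]
          rw [Real.rpow_neg (hf_nonneg x), ← Real.inv_rpow (hf_nonneg x)]
          exact Real.rpow_le_rpow (inv_nonneg.2 (hf_nonneg x)) hx ha.le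
      calc ‖∫ x, g (-↑a + ↑b * Complex.I) x ∂q‖
          ≤ c ^ a * (q Set.univ).toReal := norm_integral_le_of_norm_le_const hbd
        _ = c ^ a := by simp
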